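/- Adler's map R_{α,β}(x,y) = (y + (α−β)/(x+y), x − (α−β)/(x+y)) satisfies the parametric Yang–Baxter equation R²³_{β,γ} ∘ R¹³_{α,γ} ∘ R¹²_{α,β} = R¹²_{α,β} ∘ R¹³_{α,γ} ∘ R²³_{β,γ}, wherever defined. -/

import Mathlib

noncomputable section

/-- First component of the map. -/
def uYB (α β x y : ℂ) : ℂ := y + (α-β)/(x+y)

/-- Second component of the map. -/
def vYB (α β x y : ℂ) : ℂ := x - (α-β)/(x+y)

/-- The denominator appearing in the map. -/
def dYB (α β x y : ℂ) : ℂ := x+y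

/-- Adler's map `R_(α,β)(x,y) = (y+(α−β)/(x+y), x−(α−β)/(x+y))` satisfies the parametric Yang–Baxter equation
`R²³ ∘ R¹³ ∘ R¹² = R¹² ∘ R¹³ ∘ R²³` on `ℂ³`, wherever all denominators are nonzero. -/
theorem adler_YangBaxter (α β γ x y z : ℂ)
    (x₁ y₁ x₂ z₁ y₂ z₂ ty tz tx tzz txx tyy : ℂ)
    -- left-hand side  R²³_(β,γ) ∘ R¹³_(α,γ) ∘ R¹²_(α,β) (x,y,z):
    (hx₁ : x₁ = uYB α β x y) (hy₁ : y₁ = vYB α β x y)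
    (hx₂ : x₂ = uYB α γ x₁ z) (hz₁ : z₁ = vYB α γ x₁ z)
    (hy₂ : y₂ = uYB β γ y₁ z₁) (hz₂ : z₂ = vYB β γ y₁ z₁)
    -- right-hand side  R¹²_(α,β) ∘ R¹³_(α,γ) ∘ R²³_(β,γ) (x,y,z):
    (hty : ty = uYB β γ y z) (htz : tz = vYB β γ y z)
    (htx : tx = uYB α γ x tz) (htzz : tzz = vYB α γ x tz)
    (htxx : txx = uYB α β tx ty) (htyy : tyy = vYB α β tx ty)
    -- all denominators nonzero:
    (h1 : dYB α β x y ≠ 0) (h2 : dYB α γ x₁ z ≠ 0) (h3 : dYB β γ y₁ z₁ ≠ 0)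
    (h4 : dYB β γ y z ≠ 0) (h5 : dYB α γ x tz ≠ 0) (h6 : dYB α β tx ty ≠ 0) :
    x₂ = txx ∧ y₂ = tyy ∧ z₂ = tzz := by
  have hA : x + y ≠ 0 := h1
  have hD : y + z ≠ 0 := h4
  -- single-fraction form of the first composite denominator
  have e1 : x₁ + z = ((x+y)*(y+z) + (α-β))/(x+y) := by
    rw [hx₁]; simp only [uYB]; field_simp; ring
  have hB : (x+y)*(y+z) + (α-β) ≠ 0 := by
    intro hc; apply h2; simp only [dYB]; rw [e1, hc, zero_div]
  -- right-hand side composite denominator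
  have e3 : x + tz = ((x+y)*(y+z) - (β-γ))/(y+z) := by
    rw [htz]; simp only [vYB]; field_simp; ring
  have hE : (x+y)*(y+z) - (β-γ) ≠ 0 := by
    intro hc; apply h5; simp only [dYB]; rw [e3, hc, zero_div]
  -- closed forms for the first-step outputs
  have ex₂ : x₂ = z + (α-γ)*(x+y)/((x+y)*(y+z) + (α-β)) := by
    rw [hx₂]; simp only [uYB]; rw [e1, div_div_eq_mul_div]
  have ez₁ : z₁ = x₁ - (α-γ)*(x+y)/((x+y)*(y+z) + (α-β)) := by
    rw [hz₁]; simp only [vYB]; rw [e1, div_div_eq_mul_div]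
  have e2 : y₁ + z₁ = (x+y)*((x+y)*(y+z) - (β-γ))/((x+y)*(y+z) + (α-β)) := by
    rw [hy₁, ez₁, hx₁]; simp only [uYB, vYB]; field_simp; ring
  have etx : tx = tz + (α-γ)*(y+z)/((x+y)*(y+z) - (β-γ)) := by
    rw [htx]; simp only [uYB]; rw [e3, div_div_eq_mul_div]
  have etzz : tzz = x - (α-γ)*(y+z)/((x+y)*(y+z) - (β-γ)) := by
    rw [htzz]; simp only [vYB]; rw [e3, div_div_eq_mul_div]
  have e4 : tx + ty = (y+z)*((x+y)*(y+z) + (α-β))/((x+y)*(y+z) - (β-γ)) := by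
    rw [etx, hty, htz]; simp only [uYB, vYB]; rw [eq_div_iff hE]; linear_combination div_mul_cancel₀ ((α-γ)*(y+z)) hE
  -- second-step closed forms
  have ey₂ : y₂ = z₁ + (β-γ)*((x+y)*(y+z) + (α-β))/((x+y)*((x+y)*(y+z) - (β-γ))) := by
    rw [hy₂]; simp only [uYB]; rw [e2, div_div_eq_mul_div]
  have ez₂ : z₂ = y₁ - (β-γ)*((x+y)*(y+z) + (α-β))/((x+y)*((x+y)*(y+z) - (β-γ))) := by
    rw [hz₂]; simp only [vYB]; rw [e2, div_div_eq_mul_div]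
  have etxx : txx = ty + (α-β)*((x+y)*(y+z) - (β-γ))/((y+z)*((x+y)*(y+z) + (α-β))) := by
    rw [htxx]; simp only [uYB]; rw [e4, div_div_eq_mul_div]
  have etyy : tyy = tx - (α-β)*((x+y)*(y+z) - (β-γ))/((y+z)*((x+y)*(y+z) + (α-β))) := by
    rw [htyy]; simp only [vYB]; rw [e4, div_div_eq_mul_div]
  refine ⟨?_, ?_, ?_⟩
  · rw [ex₂, etxx, hty]; simp only [uYB]; field_simp; ring
  · rw [ey₂, etyy, ez₁, hx₁, etx, htz]; simp only [uYB, vYB]; field_simp; ring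
  · rw [ez₂, etzz, hy₁]; simp only [vYB]; field_simp; ring

end
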